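/- Multiplicative Azuma inequality: Let {X_t}_{t∈[N]} be random variables in [0,1] adapted to a filtration {ℱ_t}. Then for any δ ∈ (0,1), with probability at least 1−δ, Σ_{t=1}^N E[X_t | ℱ_{t−1}] ≤ 2·Σ_{t=1}^N X_t + 2·log(1/δ). -/

import Mathlib

open MeasureTheory

/-- Multiplicative Azuma inequality: for an adapted sequence `X` with values in
`[0,1]`, with probability at least `1 − δ`,
`Σ_{t<N} E[X_{t+1} | ℱ_t] ≤ 2·Σ_{t<N} X_{t+1} + 2·log(1/δ)`. -/
theorem multiplicative_azuma {Ω : Type*} {m0 : MeasurableSpace Ω}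
    (μ : Measure Ω) [IsProbabilityMeasure μ]
    (ℱ : Filtration ℕ m0) (X : ℕ → Ω → ℝ) (N : ℕ) (δ : ℝ)
    (hδ0 : 0 < δ) (hδ1 : δ < 1)
    (hadapted : StronglyAdapted ℱ X)
    (hbdd : ∀ t, ∀ᵐ ω ∂μ, X t ω ∈ Set.Icc (0 : ℝ) 1)
    (hint : ∀ t, Integrable (X t) μ) :
    (1 : ℝ) - δ ≤
      (μ {ω | ∑ t ∈ Finset.range N, (μ[X (t + 1)|ℱ t]) ω ≤
          2 * ∑ t ∈ Finset.range N, X (t + 1) ω + 2 * Real.log (1 / δ)}).toReal := by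
  set c : ℝ := 1 - Real.exp (-1) with hc_def
  have hexp2 : Real.exp (-1) ≤ 1 / 2 := by
    rw [Real.exp_neg]
    have h2 : (2 : ℝ) ≤ Real.exp 1 := by linarith [Real.add_one_le_exp (1 : ℝ)]
    rw [inv_le_comm₀ (by positivity) (by norm_num)]
    linarith
  have hc_half : 1 / 2 ≤ c := by simp only [hc_def]; linarith
  have hc1 : c < 1 := by
    have := Real.exp_pos (-1); simp only [hc_def]; linarith
  have hc0 : 0 < c := by linarith
  -- convexity bound : exp(-x) ≤ 1 - c x on [0,1]
  have hconv : ∀ x : ℝ, x ∈ Set.Icc (0 : ℝ) 1 → Real.exp (-x) ≤ 1 - c * x := by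
    intro x hx
    have h := convexOn_exp.2 (Set.mem_univ (-1 : ℝ)) (Set.mem_univ (0 : ℝ)) hx.1
      (by linarith [hx.2] : (0:ℝ) ≤ 1 - x) (by ring)
    simp only [smul_eq_mul, mul_neg, mul_one, mul_zero, add_zero, Real.exp_zero] at h
    simp only [hc_def]
    nlinarith [h]
  set Y : ℕ → Ω → ℝ := fun t => μ[X (t + 1)|ℱ t] with hY_def
  have hY_bdd : ∀ t, ∀ᵐ ω ∂μ, Y t ω ∈ Set.Icc (0 : ℝ) 1 := by
    intro t
    have h0 : (0 : Ω → ℝ) ≤ᵐ[μ] Y t :=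
      condExp_nonneg ((hbdd (t + 1)).mono fun ω h => h.1)
    have h1 : Y t ≤ᵐ[μ] μ[(fun _ => (1 : ℝ))|ℱ t] :=
      condExp_mono (hint (t + 1)) (integrable_const 1)
        ((hbdd (t + 1)).mono fun ω h => h.2)
    rw [condExp_const (ℱ.le t)] at h1
    filter_upwards [h0, h1] with ω h0 h1
    exact ⟨h0, h1⟩
  have hgood : ∀ᵐ ω ∂μ, ∀ t : ℕ,
      X (t + 1) ω ∈ Set.Icc (0 : ℝ) 1 ∧ Y t ω ∈ Set.Icc (0 : ℝ) 1 :=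
    ae_all_iff.2 fun t => (hbdd (t + 1)).and (hY_bdd t)
  set S : ℕ → Ω → ℝ := fun n ω => ∑ t ∈ Finset.range n, (c * Y t ω - X (t + 1) ω)
    with hS_def
  set Z : ℕ → Ω → ℝ := fun n ω => Real.exp (S n ω) with hZ_def
  have hS_meas : ∀ n, StronglyMeasurable[ℱ n] (S n) := by
    intro n
    apply Finset.stronglyMeasurable_fun_sum
    intro t ht
    have ht' : t < n := Finset.mem_range.mp ht
    exact ((stronglyMeasurable_condExp.mono (ℱ.mono ht'.le)).const_mul c).sub
      ((hadapted (t + 1)).mono (ℱ.mono ht'))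
  have hZ_meas : ∀ n, StronglyMeasurable[ℱ n] (Z n) := fun n =>
    Real.continuous_exp.comp_stronglyMeasurable (hS_meas n)
  have hS_le : ∀ n ω, (∀ t : ℕ, X (t + 1) ω ∈ Set.Icc (0 : ℝ) 1 ∧
      Y t ω ∈ Set.Icc (0 : ℝ) 1) → S n ω ≤ n := by
    intro n ω hω
    calc S n ω ≤ ∑ t ∈ Finset.range n, (1 : ℝ) := by
          apply Finset.sum_le_sum
          intro t _
          obtain ⟨hX, hY⟩ := hω t
          nlinarith [hX.1, hY.2, hY.1]
      _ = n := by simp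
  have hZ_int : ∀ n, Integrable (Z n) μ := by
    intro n
    refine Integrable.mono' (integrable_const (Real.exp n))
      ((hZ_meas n).mono (ℱ.le n)).aestronglyMeasurable ?_
    filter_upwards [hgood] with ω hω
    rw [Real.norm_eq_abs, abs_of_pos (Real.exp_pos _)]
    exact Real.exp_le_exp.2 (hS_le n ω hω)
  -- main inductive bound
  have hmain : ∀ n, ∫ ω, Z n ω ∂μ ≤ 1 := by
    intro n
    induction n with
    | zero =>
      simp only [hZ_def, hS_def, Finset.range_zero, Finset.sum_empty, Real.exp_zero]
      simp
    | succ n ih =>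
      set f : Ω → ℝ := fun ω => Z n ω * Real.exp (c * Y n ω) with hf_def
      set g : Ω → ℝ := fun ω => Real.exp (-X (n + 1) ω) with hg_def
      have hf_meas : StronglyMeasurable[ℱ n] f :=
        (hZ_meas n).mul
          (Real.continuous_exp.comp_stronglyMeasurable
            (stronglyMeasurable_condExp.const_mul c))
      have hg_meas : AEStronglyMeasurable g μ :=
        (Real.continuous_exp.comp_stronglyMeasurable
          (((hadapted (n + 1)).mono (ℱ.le (n + 1))).neg)).aestronglyMeasurable
      have hg_int : Integrable g μ := by
        refine Integrable.mono' (integrable_const (1 : ℝ)) hg_meas ?_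
        filter_upwards [hbdd (n + 1)] with ω hω
        rw [Real.norm_eq_abs, abs_of_pos (Real.exp_pos _)]
        calc Real.exp (-X (n + 1) ω) ≤ Real.exp 0 :=
              Real.exp_le_exp.2 (by linarith [hω.1])
          _ = 1 := Real.exp_zero
      have hfg_eq : Z (n + 1) = f * g := by
        funext ω
        simp only [hZ_def, hS_def, hf_def, hg_def, Finset.sum_range_succ, Pi.mul_apply]
        rw [← Real.exp_add, ← Real.exp_add]
        congr 1
        ring
      have hfg_int : Integrable (f * g) μ := hfg_eq ▸ hZ_int (n + 1)
      have hpull : μ[f * g|ℱ n] =ᵐ[μ] f * μ[g|ℱ n] :=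
        condExp_mul_of_stronglyMeasurable_left hf_meas hfg_int hg_int
      -- conditional bound on g
      have hcond : μ[g|ℱ n] ≤ᵐ[μ] fun ω => Real.exp (-(c * Y n ω)) := by
        have h1 : μ[g|ℱ n] ≤ᵐ[μ] μ[(fun _ => (1:ℝ)) - c • X (n + 1)|ℱ n] := by
          refine condExp_mono hg_int ((integrable_const 1).sub ((hint (n+1)).smul c)) ?_
          filter_upwards [hbdd (n + 1)] with ω hω
          simpa using hconv (X (n + 1) ω) hω
        have h2 : μ[(fun _ => (1:ℝ)) - c • X (n + 1)|ℱ n] =ᵐ[μ]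
            fun ω => 1 - c * Y n ω := by
          refine (condExp_sub (m := ℱ n) (integrable_const 1) ((hint (n+1)).smul c)).trans ?_
          have h3 := condExp_smul (μ := μ) (m := ℱ n) c (X (n + 1))
          filter_upwards [h3] with ω h3
          simp only [Pi.sub_apply, condExp_const (ℱ.le n), h3, Pi.smul_apply,
            smul_eq_mul, hY_def]
        filter_upwards [h1, h2] with ω h1 h2
        calc (μ[g|ℱ n]) ω ≤ 1 - c * Y n ω := h2 ▸ h1
          _ ≤ Real.exp (-(c * Y n ω)) := by
              linarith [Real.add_one_le_exp (-(c * Y n ω))]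
      -- condexp of g is bounded by 1 a.e.
      have hcond_bdd : ∀ᵐ ω ∂μ, |(μ[g|ℱ n]) ω| ≤ 1 := by
        have h0 : (0 : Ω → ℝ) ≤ᵐ[μ] μ[g|ℱ n] :=
          condExp_nonneg (Filter.Eventually.of_forall fun ω => (Real.exp_pos _).le)
        have h1 : μ[g|ℱ n] ≤ᵐ[μ] μ[(fun _ => (1:ℝ))|ℱ n] := by
          refine condExp_mono hg_int (integrable_const 1) ?_
          filter_upwards [hbdd (n + 1)] with ω hω
          calc g ω ≤ Real.exp 0 := Real.exp_le_exp.2 (by linarith [hω.1])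
            _ = 1 := Real.exp_zero
        rw [condExp_const (ℱ.le n)] at h1
        filter_upwards [h0, h1] with ω h0 h1
        rw [abs_of_nonneg h0]; exact h1
      have hprod_int : Integrable (fun ω => f ω * (μ[g|ℱ n]) ω) μ := by
        refine Integrable.mono' (integrable_const (Real.exp (n + 1)))
          (((hf_meas.mono (ℱ.le n))).aestronglyMeasurable.mul
            (stronglyMeasurable_condExp.mono (ℱ.le n)).aestronglyMeasurable) ?_
        filter_upwards [hgood, hcond_bdd] with ω hω hb
        rw [norm_mul, Real.norm_eq_abs, Real.norm_eq_abs]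
        have hf_bd : |f ω| ≤ Real.exp (n + 1) := by
          rw [hf_def, abs_of_pos (by positivity : 0 < Z n ω * Real.exp (c * Y n ω))]
          rw [hZ_def, ← Real.exp_add]
          refine Real.exp_le_exp.2 ?_
          have := hS_le n ω hω
          have hYb := (hω n).2
          nlinarith [hYb.1, hYb.2]
        calc |f ω| * |(μ[g|ℱ n]) ω| ≤ Real.exp (n + 1) * 1 := by
              apply mul_le_mul hf_bd hb (abs_nonneg _) (Real.exp_pos _).le
          _ = Real.exp (n + 1) := mul_one _
      calc ∫ ω, Z (n + 1) ω ∂μ = ∫ ω, (f * g) ω ∂μ := by rw [hfg_eq]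
        _ = ∫ ω, (μ[f * g|ℱ n]) ω ∂μ := (integral_condExp (ℱ.le n)).symm
        _ = ∫ ω, f ω * (μ[g|ℱ n]) ω ∂μ := integral_congr_ae hpull
        _ ≤ ∫ ω, Z n ω ∂μ := by
            refine integral_mono_ae hprod_int (hZ_int n) ?_
            filter_upwards [hcond] with ω hω
            have hf_pos : 0 ≤ f ω := by positivity
            calc f ω * (μ[g|ℱ n]) ω ≤ f ω * Real.exp (-(c * Y n ω)) :=
                  mul_le_mul_of_nonneg_left hω hf_pos
              _ = Z n ω := by
                  rw [hf_def, mul_assoc, ← Real.exp_add]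
                  simp
        _ ≤ 1 := ih
  -- Markov's inequality
  have hmarkov : (μ {ω | 1 / δ ≤ Z N ω}).toReal ≤ δ := by
    have h := mul_meas_ge_le_integral_of_nonneg
      (Filter.Eventually.of_forall fun ω => (Real.exp_pos (S N ω)).le) (hZ_int N) (1 / δ)
    have h2 : (1 / δ) * (μ {ω | 1 / δ ≤ Z N ω}).toReal ≤ 1 := h.trans (hmain N)
    calc (μ {ω | 1 / δ ≤ Z N ω}).toReal
        = δ * ((1 / δ) * (μ {ω | 1 / δ ≤ Z N ω}).toReal) := by
          field_simp
      _ ≤ δ * 1 := by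
          apply mul_le_mul_of_nonneg_left h2 hδ0.le
      _ = δ := mul_one δ
  set A : Set Ω := {ω | S N ω ≤ Real.log (1 / δ)} with hA_def
  have hAc : (μ Aᶜ).toReal ≤ δ := by
    refine le_trans (ENNReal.toReal_mono (measure_ne_top _ _) (measure_mono ?_)) hmarkov
    intro ω hω
    simp only [hA_def, Set.mem_compl_iff, Set.mem_setOf_eq, not_le] at hω
    simp only [Set.mem_setOf_eq, hZ_def]
    calc 1 / δ = Real.exp (Real.log (1 / δ)) := (Real.exp_log (by positivity)).symm
      _ ≤ Real.exp (S N ω) := Real.exp_le_exp.2 hω.le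
  have hA_lb : 1 - δ ≤ (μ A).toReal := by
    have hle : (1 : ENNReal) ≤ μ A + μ Aᶜ := by
      rw [← measure_univ (μ := μ), ← Set.union_compl_self A]
      exact measure_union_le A Aᶜ
    have := ENNReal.toReal_mono (by
      exact ENNReal.add_ne_top.2 ⟨measure_ne_top _ _, measure_ne_top _ _⟩) hle
    rw [ENNReal.toReal_add (measure_ne_top _ _) (measure_ne_top _ _)] at this
    simp only [ENNReal.toReal_one] at this
    linarith
  -- A is a.e. contained in the target set
  have hsub : μ A ≤ μ {ω | ∑ t ∈ Finset.range N, (μ[X (t + 1)|ℱ t]) ω ≤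
      2 * ∑ t ∈ Finset.range N, X (t + 1) ω + 2 * Real.log (1 / δ)} := by
    apply measure_mono_ae
    filter_upwards [hgood] with ω hω hA
    replace hA : ∑ t ∈ Finset.range N, (c * Y t ω - X (t + 1) ω) ≤ Real.log (1 / δ) := hA
    have hsum : ∑ t ∈ Finset.range N, (c * Y t ω - X (t + 1) ω)
        = c * ∑ t ∈ Finset.range N, Y t ω - ∑ t ∈ Finset.range N, X (t + 1) ω := by
      rw [Finset.sum_sub_distrib, Finset.mul_sum]
    rw [hsum] at hA
    have hY0 : 0 ≤ ∑ t ∈ Finset.range N, Y t ω :=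
      Finset.sum_nonneg fun t _ => (hω t).2.1
    have : ∑ t ∈ Finset.range N, Y t ω ≤
        2 * ∑ t ∈ Finset.range N, X (t + 1) ω + 2 * Real.log (1 / δ) := by
      nlinarith [mul_nonneg (by linarith : (0:ℝ) ≤ c - 1/2) hY0]
    show ∑ t ∈ Finset.range N, (μ[X (t + 1)|ℱ t]) ω ≤
        2 * ∑ t ∈ Finset.range N, X (t + 1) ω + 2 * Real.log (1 / δ)
    exact this
  calc (1 : ℝ) - δ ≤ (μ A).toReal := hA_lb
    _ ≤ _ := ENNReal.toReal_mono (measure_ne_top _ _) hsub
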